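/- Let L be a free abelian group of finite rank equipped with a nondegenerate symmetric ℤ-bilinear form ⟨·,·⟩ : L × L → ℚ, and let ℓ be a complex number that is not rational. Let S be a set with an action of the additive group L (written (g, s) ↦ g + s), equipped with a function (·,·) : L × S → ℂ/ℤ satisfying (g1 + g2, g3 + s) = (⟨g1, g3⟩/ℓ + ℤ) + (⟨g2, g3⟩/ℓ + ℤ) + (g1, s) + (g2, s) in ℂ/ℤ for all g1, g2, g3 ∈ L and s ∈ S. Then the action of L on S is free: for g1, g2 ∈ L and s ∈ S, if g1 + s = g2 + s, then g1 = g2. -/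

import Mathlib

/-- Let `L` be a free abelian group of finite rank with a nondegenerate
symmetric ℤ-bilinear form `B : L × L → ℚ`, and let `ℓ` be a complex number that is not
rational.  If `S` is an `L`-set equipped with a function `f : L × S → ℂ/ℤ` satisfying
`f(g1+g2, g3+s) = ⟨g1,g3⟩/ℓ + ⟨g2,g3⟩/ℓ + f(g1,s) + f(g2,s)` in `ℂ/ℤ`, then the action
of `L` on `S` is free. -/
theorem lset_action_free
    (L : Type) [AddCommGroup L] [Module.Free ℤ L] [Module.Finite ℤ L]
    (B : L → L → ℚ)
    (hBaddL : ∀ x y z : L, B (x + y) z = B x z + B y z)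
    (hBaddR : ∀ x y z : L, B x (y + z) = B x y + B x z)
    (hBsymm : ∀ x y : L, B x y = B y x)
    (hBnd : ∀ y : L, (∀ x : L, B x y = 0) → y = 0)
    (ℓ : ℂ) (hℓ : ¬ ∃ q : ℚ, ℓ = (q : ℂ))
    (S : Type) [AddAction L S]
    (f : L → S → ℂ ⧸ AddSubgroup.zmultiples (1 : ℂ))
    (hf : ∀ (g1 g2 g3 : L) (s : S),
      f (g1 + g2) (g3 +ᵥ s)
        = QuotientAddGroup.mk ((B g1 g3 : ℂ) / ℓ)
          + QuotientAddGroup.mk ((B g2 g3 : ℂ) / ℓ) + f g1 s + f g2 s) :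
    ∀ (g1 g2 : L) (s : S), g1 +ᵥ s = g2 +ᵥ s → g1 = g2 := by
  have hℓ0 : ℓ ≠ 0 := by
    rintro rfl; exact hℓ ⟨0, by norm_num⟩
  have hB0L : ∀ z : L, B 0 z = 0 := by
    intro z
    have := hBaddL 0 0 z
    simp at this
    linarith
  have hmk0 : (QuotientAddGroup.mk ((0 : ℂ) / ℓ) :
      ℂ ⧸ AddSubgroup.zmultiples (1 : ℂ)) = 0 := by
    simp
  have hf0 : ∀ s : S, f 0 s = 0 := by
    intro s
    have e := hf 0 0 0 s
    rw [add_zero, zero_vadd, hB0L] at e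
    push_cast at e
    rw [hmk0, zero_add, zero_add] at e
    exact (add_eq_left.mp e.symm)
  have key : ∀ (h : L) (s : S), h +ᵥ s = s → h = 0 := by
    intro h s hs
    apply hBnd
    intro g
    by_contra hg
    have h1 := hf g 0 h s
    rw [hs, add_zero, hB0L, hf0] at h1
    push_cast at h1
    rw [hmk0, add_zero, add_zero] at h1
    have h2 : (QuotientAddGroup.mk ((B g h : ℂ) / ℓ) :
        ℂ ⧸ AddSubgroup.zmultiples (1 : ℂ)) = 0 :=
      (right_eq_add.mp h1)
    rw [QuotientAddGroup.eq_zero_iff, AddSubgroup.mem_zmultiples_iff] at h2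
    obtain ⟨n, hn⟩ := h2
    rw [zsmul_eq_mul, mul_one] at hn
    have hBn : (B g h : ℂ) = n * ℓ := by
      field_simp at hn
      linear_combination -hn
    rcases eq_or_ne n 0 with rfl | hn0
    · apply hg
      have : (B g h : ℂ) = 0 := by rw [hBn]; simp
      exact_mod_cast this
    · apply hℓ
      refine ⟨B g h / n, ?_⟩
      push_cast
      rw [hBn, mul_comm, mul_div_assoc, div_self (show (n:ℂ) ≠ 0 by exact_mod_cast hn0), mul_one]
  intro g1 g2 s hs
  have h3 : (g1 - g2) +ᵥ (g2 +ᵥ s) = g2 +ᵥ s := by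
    rw [vadd_vadd, sub_add_cancel, hs]
  exact sub_eq_zero.mp (key _ _ h3)
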